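/- Let N be a positive integer and let q = P^d be the largest prime power ≤ N (P prime, d ≥ 1, and every prime power ≤ N is ≤ q). Suppose there is a prime p₀ with p₀ ≠ P, p₀ not dividing N, and the base-p₀ digit sum of N at most 5; and suppose that for every prime r which divides N, and also for r = p₀, every r-acceptable decomposition of N into three positive integers has all three summands less than q. Then there do not exist three decompositions of N into three positive integer summands such that for every prime p at least one of the three decompositions is p-acceptable. -/

import Mathlib

open Nat Finset

private lemma mult3_spec (a b c : ℕ) :
    a ! * b ! * c ! * Nat.multinomial Finset.univ ![a, b, c] = (a + b + c)! := by
  have h := Nat.multinomial_spec (Finset.univ : Finset (Fin 3)) ![a, b, c]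
  simpa [Fin.prod_univ_three, Fin.sum_univ_three] using h

private lemma core_val_eq {r : ℕ} (hr : r.Prime) (a b c : ℕ)
    (h : ¬ r ∣ Nat.multinomial Finset.univ ![a, b, c]) :
    padicValNat r (a !) + padicValNat r (b !) + padicValNat r (c !)
      = padicValNat r ((a + b + c)!) := by
  haveI : Fact r.Prime := ⟨hr⟩
  have af : a ! ≠ 0 := (Nat.factorial_pos a).ne'
  have bf : b ! ≠ 0 := (Nat.factorial_pos b).ne'
  have cf : c ! ≠ 0 := (Nat.factorial_pos c).ne'
  have mne : Nat.multinomial Finset.univ ![a, b, c] ≠ 0 := (Nat.multinomial_pos _ _).ne'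
  have hspec := congrArg (padicValNat r) (mult3_spec a b c)
  rw [padicValNat.mul (mul_ne_zero (mul_ne_zero af bf) cf) mne,
      padicValNat.mul (mul_ne_zero af bf) cf, padicValNat.mul af bf,
      padicValNat.eq_zero_of_not_dvd h, add_zero] at hspec
  exact hspec

private lemma core_div_eq {r : ℕ} (hr : r.Prime) {a b c N : ℕ} (habc : a + b + c = N)
    (h : ¬ r ∣ Nat.multinomial Finset.univ ![a, b, c]) (i : ℕ) :
    a / r ^ i + b / r ^ i + c / r ^ i = N / r ^ i := by
  haveI : Fact r.Prime := ⟨hr⟩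
  have hval := core_val_eq hr a b c h
  rw [habc] at hval
  have hb : ∀ m : ℕ, m ≤ N → Nat.log r m < N + 1 := fun m hm =>
    lt_of_le_of_lt (le_trans (Nat.log_le_self r m) hm) (Nat.lt_succ_self N)
  rw [padicValNat_factorial (hb a (by omega)), padicValNat_factorial (hb b (by omega)),
      padicValNat_factorial (hb c (by omega)), padicValNat_factorial (hb N le_rfl)] at hval
  have hle : ∀ j ∈ Finset.Ico 1 (N + 1), a / r ^ j + b / r ^ j + c / r ^ j ≤ N / r ^ j := by
    intro j _
    calc a / r ^ j + b / r ^ j + c / r ^ j ≤ (a + b) / r ^ j + c / r ^ j :=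
          Nat.add_le_add_right (Nat.add_div_le_add_div a b _) _
      _ ≤ (a + b + c) / r ^ j := Nat.add_div_le_add_div _ _ _
      _ = N / r ^ j := by rw [habc]
  have hsum : ∑ j ∈ Finset.Ico 1 (N + 1), (a / r ^ j + b / r ^ j + c / r ^ j)
      = ∑ j ∈ Finset.Ico 1 (N + 1), N / r ^ j := by
    rw [Finset.sum_add_distrib, Finset.sum_add_distrib, hval]
  have hpt := (Finset.sum_eq_sum_iff_of_le hle).mp hsum
  rcases Nat.lt_or_ge i 1 with h0 | h1
  · interval_cases i
    simpa using habc
  rcases Nat.lt_or_ge i (N + 1) with h2 | h2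
  · exact hpt i (Finset.mem_Ico.mpr ⟨h1, h2⟩)
  · have ha : a ≤ N := by omega
    have hbb : b ≤ N := by omega
    have hcc : c ≤ N := by omega
    have hNi : N < r ^ i :=
      lt_of_lt_of_le (Nat.lt_pow_self hr.one_lt : N < r ^ N) (Nat.pow_le_pow_right hr.pos (by omega))
    rw [Nat.div_eq_of_lt (by omega), Nat.div_eq_of_lt (by omega), Nat.div_eq_of_lt (by omega),
        Nat.div_eq_of_lt hNi]

private lemma core_pow_dvd {r : ℕ} (hr : r.Prime) {a b c N : ℕ} (hN : N ≠ 0)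
    (habc : a + b + c = N) (h : ¬ r ∣ Nat.multinomial Finset.univ ![a, b, c]) :
    r ^ N.factorization r ∣ a ∧ r ^ N.factorization r ∣ b ∧ r ^ N.factorization r ∣ c := by
  set m := r ^ N.factorization r with hm
  have hmdvd : m ∣ N := Nat.ordProj_dvd N r
  have heq := core_div_eq hr habc h (N.factorization r)
  have hN' : m * (N / m) = N := Nat.mul_div_cancel' hmdvd
  have e1 := Nat.div_add_mod a m
  have e2 := Nat.div_add_mod b m
  have e3 := Nat.div_add_mod c m
  have hsum : m * (a / m) + m * (b / m) + m * (c / m) = N := by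
    rw [← Nat.mul_add, ← Nat.mul_add, heq, hN']
  have hx : a + b + c = m * (a / m) + m * (b / m) + m * (c / m) + (a % m + b % m + c % m) := by
    conv_lhs => rw [← e1, ← e2, ← e3]
    ring
  have h5 : m * (a / m) + m * (b / m) + m * (c / m) + (a % m + b % m + c % m) = N :=
    hx.symm.trans habc
  rw [hsum] at h5
  have key : a % m + b % m + c % m = 0 := by omega
  refine ⟨Nat.dvd_of_mod_eq_zero (by omega), Nat.dvd_of_mod_eq_zero (by omega),
    Nat.dvd_of_mod_eq_zero (by omega)⟩

private lemma core_digit_sum {r : ℕ} (hr : r.Prime) {a b c N : ℕ} (habc : a + b + c = N)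
    (h : ¬ r ∣ Nat.multinomial Finset.univ ![a, b, c]) :
    (r.digits a).sum + (r.digits b).sum + (r.digits c).sum = (r.digits N).sum := by
  haveI : Fact r.Prime := ⟨hr⟩
  have hval := core_val_eq hr a b c h
  rw [habc] at hval
  have H : (r - 1) * (padicValNat r (a !) + padicValNat r (b !) + padicValNat r (c !))
      = (r - 1) * padicValNat r (N !) := by rw [hval]
  rw [Nat.mul_add, Nat.mul_add, sub_one_mul_padicValNat_factorial a,
      sub_one_mul_padicValNat_factorial b, sub_one_mul_padicValNat_factorial c,
      sub_one_mul_padicValNat_factorial N] at H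
  have d1 := Nat.digit_sum_le r a
  have d2 := Nat.digit_sum_le r b
  have d3 := Nat.digit_sum_le r c
  have dN := Nat.digit_sum_le r N
  omega

private lemma digits_sum_eq_zero {p : ℕ} (hp : 2 ≤ p) :
    ∀ n : ℕ, (p.digits n).sum = 0 → n = 0 := by
  intro n
  induction n using Nat.strong_induction_on with
  | _ n ih =>
    intro h
    rcases Nat.eq_zero_or_pos n with rfl | hn
    · rfl
    · rw [Nat.digits_def' (by omega : 1 < p) hn, List.sum_cons] at h
      obtain ⟨hmod, hsum⟩ := Nat.add_eq_zero.mp h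
      have h2 : n / p = 0 := ih (n / p) (Nat.div_lt_self hn (by omega)) hsum
      have hd := Nat.div_add_mod n p
      rw [h2, hmod, Nat.mul_zero] at hd
      exact hd.symm

private lemma eq_pow_of_digits_sum_one {p : ℕ} (hp : 2 ≤ p) :
    ∀ n : ℕ, (p.digits n).sum = 1 → ∃ k, n = p ^ k := by
  intro n
  induction n using Nat.strong_induction_on with
  | _ n ih =>
    intro h
    rcases Nat.eq_zero_or_pos n with rfl | hn
    · simp at h
    · rw [Nat.digits_def' (by omega : 1 < p) hn, List.sum_cons] at h
      have hd := Nat.div_add_mod n p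
      cases hS : (p.digits (n / p)).sum with
      | zero =>
        have h0 : n / p = 0 := digits_sum_eq_zero hp _ hS
        rw [hS, add_zero] at h
        rw [h0, h, Nat.mul_zero, Nat.zero_add] at hd
        exact ⟨0, by rw [← hd, pow_zero]⟩
      | succ s =>
        rw [hS] at h
        have h' : n % p + s = 0 := by omega
        obtain ⟨hm0, hs0⟩ := Nat.add_eq_zero.mp h'
        have hS1 : (p.digits (n / p)).sum = 1 := by rw [hS, hs0]
        obtain ⟨k, hk⟩ := ih (n / p) (Nat.div_lt_self hn (by omega)) hS1
        rw [hm0, add_zero, hk] at hd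
        exact ⟨k + 1, by rw [← hd, pow_succ, Nat.mul_comm]⟩

private lemma big_part {N P d : ℕ} (hP : P.Prime) (hqN : P ^ d ≤ N) {x y z : ℕ}
    (hs : x + y + z = N) (h : ¬ P ∣ Nat.multinomial Finset.univ ![x, y, z]) :
    P ^ d ≤ x ∨ P ^ d ≤ y ∨ P ^ d ≤ z := by
  by_contra hc
  push_neg at hc
  obtain ⟨h1, h2, h3⟩ := hc
  have heq := core_div_eq hP hs h d
  rw [Nat.div_eq_of_lt h1, Nat.div_eq_of_lt h2, Nat.div_eq_of_lt h3] at heq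
  have : 1 ≤ N / P ^ d := (Nat.one_le_div_iff (pow_pos hP.pos d)).mpr hqN
  omega

private lemma key_contra (N q P d p₀ : ℕ) (hP : P.Prime) (hp₀ : p₀.Prime) (hp₀N : ¬ p₀ ∣ N)
    (hd : 1 ≤ d) (hq : q = P ^ d) (hqN : q ≤ N)
    (hdig : (p₀.digits N).sum ≤ 5)
    (hthresh : ∀ r : ℕ, r.Prime → (r ∣ N ∨ r = p₀) →
      ∀ a b c : ℕ, 0 < a → 0 < b → 0 < c → a + b + c = N →
        ¬ r ∣ Nat.multinomial Finset.univ ![a, b, c] → a < q ∧ b < q ∧ c < q)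
    (x₁ x₂ x₃ y₁ y₂ y₃ z₁ z₂ z₃ : ℕ)
    (hx₁ : 0 < x₁) (hx₂ : 0 < x₂) (hx₃ : 0 < x₃) (hxs : x₁ + x₂ + x₃ = N)
    (hy₁ : 0 < y₁) (hy₂ : 0 < y₂) (hy₃ : 0 < y₃) (hys : y₁ + y₂ + y₃ = N)
    (hz₁ : 0 < z₁) (hz₂ : 0 < z₂) (hz₃ : 0 < z₃) (hzs : z₁ + z₂ + z₃ = N)
    (hPx : ¬ P ∣ Nat.multinomial Finset.univ ![x₁, x₂, x₃])
    (hpy : ¬ p₀ ∣ Nat.multinomial Finset.univ ![y₁, y₂, y₃])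
    (hcov : ∀ r : ℕ, r.Prime → r ∣ N →
      ¬ r ∣ Nat.multinomial Finset.univ ![x₁, x₂, x₃] ∨
      ¬ r ∣ Nat.multinomial Finset.univ ![y₁, y₂, y₃] ∨
      ¬ r ∣ Nat.multinomial Finset.univ ![z₁, z₂, z₃]) : False := by
  subst hq
  have hN0 : N ≠ 0 := by omega
  have hbig := big_part hP hqN hxs hPx
  have hds := core_digit_sum hp₀ hys hpy
  have s1 : (p₀.digits y₁).sum ≠ 0 := fun hs => by
    have := digits_sum_eq_zero hp₀.two_le _ hs; omega
  have s2 : (p₀.digits y₂).sum ≠ 0 := fun hs => by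
    have := digits_sum_eq_zero hp₀.two_le _ hs; omega
  have s3 : (p₀.digits y₃).sum ≠ 0 := fun hs => by
    have := digits_sum_eq_zero hp₀.two_le _ hs; omega
  have hw : ∃ k w, w = p₀ ^ k ∧ ∀ r : ℕ, r.Prime →
      ¬ r ∣ Nat.multinomial Finset.univ ![y₁, y₂, y₃] → r ^ N.factorization r ∣ w := by
    rcases (show (p₀.digits y₁).sum = 1 ∨ (p₀.digits y₂).sum = 1 ∨ (p₀.digits y₃).sum = 1 by
        omega) with h | h | h
    · obtain ⟨k, hk⟩ := eq_pow_of_digits_sum_one hp₀.two_le _ h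
      exact ⟨k, y₁, hk, fun r hr hnd => (core_pow_dvd hr hN0 hys hnd).1⟩
    · obtain ⟨k, hk⟩ := eq_pow_of_digits_sum_one hp₀.two_le _ h
      exact ⟨k, y₂, hk, fun r hr hnd => (core_pow_dvd hr hN0 hys hnd).2.1⟩
    · obtain ⟨k, hk⟩ := eq_pow_of_digits_sum_one hp₀.two_le _ h
      exact ⟨k, y₃, hk, fun r hr hnd => (core_pow_dvd hr hN0 hys hnd).2.2⟩
  obtain ⟨k, w, hwk, hwd⟩ := hw
  have step : ∀ r : ℕ, r.Prime → r ∣ N → r ^ N.factorization r ∣ z₁ ∧ z₁ < P ^ d := by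
    intro r hr hrN
    rcases hcov r hr hrN with hc | hc | hc
    · exfalso
      obtain ⟨l1, l2, l3⟩ := hthresh r hr (Or.inl hrN) x₁ x₂ x₃ hx₁ hx₂ hx₃ hxs hc
      rcases hbig with hb | hb | hb <;> omega
    · exfalso
      have hv : 0 < N.factorization r := hr.factorization_pos_of_dvd hN0 hrN
      have hrp : r ∣ p₀ ^ k := hwk ▸ dvd_trans (dvd_pow_self r hv.ne') (hwd r hr hc)
      have : r = p₀ := (Nat.prime_dvd_prime_iff_eq hr hp₀).mp (hr.dvd_of_dvd_pow hrp)
      exact hp₀N (this ▸ hrN)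
    · exact ⟨(core_pow_dvd hr hN0 hzs hc).1,
        (hthresh r hr (Or.inl hrN) z₁ z₂ z₃ hz₁ hz₂ hz₃ hzs hc).1⟩
  have hz10 : z₁ ≠ 0 := by omega
  have hNdvd : N ∣ z₁ := by
    rw [← Nat.factorization_le_iff_dvd hN0 hz10, Finsupp.le_def]
    intro p
    by_cases hp : p.Prime
    · by_cases hpd : p ∣ N
      · exact (hp.pow_dvd_iff_le_factorization hz10).mp (step p hp hpd).1
      · simp [Nat.factorization_eq_zero_of_not_dvd hpd]
    · simp [Nat.factorization_eq_zero_of_not_prime _ hp]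
  have hq2 : 2 ≤ P ^ d := Nat.one_lt_pow (by omega) hP.one_lt
  have rmf : (N.minFac).Prime := Nat.minFac_prime (by omega)
  have hlt : z₁ < P ^ d := (step N.minFac rmf (Nat.minFac_dvd N)).2
  have hle : N ≤ z₁ := Nat.le_of_dvd (by omega) hNdvd
  omega

theorem stmt_18 (N : ℕ) (hN : 0 < N) (P d : ℕ) (hP : P.Prime) (hd : 1 ≤ d)
    (q : ℕ) (hq : q = P ^ d) (hqN : q ≤ N)
    (hmax : ∀ P' d' : ℕ, P'.Prime → 1 ≤ d' → P' ^ d' ≤ N → P' ^ d' ≤ q)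
    (p₀ : ℕ) (hp₀ : p₀.Prime) (hp₀P : p₀ ≠ P) (hp₀N : ¬ p₀ ∣ N)
    (hdig : (p₀.digits N).sum ≤ 5)
    (hthresh : ∀ r : ℕ, r.Prime → (r ∣ N ∨ r = p₀) →
      ∀ a b c : ℕ, 0 < a → 0 < b → 0 < c → a + b + c = N →
        ¬ r ∣ Nat.multinomial Finset.univ ![a, b, c] →
        a < q ∧ b < q ∧ c < q) :
    ¬ ∃ a₁ a₂ a₃ b₁ b₂ b₃ c₁ c₂ c₃ : ℕ,
      (0 < a₁ ∧ 0 < a₂ ∧ 0 < a₃ ∧ a₁ + a₂ + a₃ = N) ∧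
      (0 < b₁ ∧ 0 < b₂ ∧ 0 < b₃ ∧ b₁ + b₂ + b₃ = N) ∧
      (0 < c₁ ∧ 0 < c₂ ∧ 0 < c₃ ∧ c₁ + c₂ + c₃ = N) ∧
      (∀ p : ℕ, p.Prime →
        ¬ p ∣ Nat.multinomial Finset.univ ![a₁, a₂, a₃] ∨
        ¬ p ∣ Nat.multinomial Finset.univ ![b₁, b₂, b₃] ∨
        ¬ p ∣ Nat.multinomial Finset.univ ![c₁, c₂, c₃]) := by
  subst hq
  rintro ⟨a₁, a₂, a₃, b₁, b₂, b₃, c₁, c₂, c₃,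
    ⟨ha₁, ha₂, ha₃, hAs⟩, ⟨hb₁, hb₂, hb₃, hBs⟩, ⟨hc₁, hc₂, hc₃, hCs⟩, hcov⟩
  rcases hcov P hP with hPA | hPB | hPC <;> rcases hcov p₀ hp₀ with hpA | hpB | hpC
  · obtain ⟨l1, l2, l3⟩ := hthresh p₀ hp₀ (Or.inr rfl) a₁ a₂ a₃ ha₁ ha₂ ha₃ hAs hpA
    rcases big_part hP hqN hAs hPA with h | h | h <;> omega
  · exact key_contra N (P ^ d) P d p₀ hP hp₀ hp₀N hd rfl hqN hdig hthresh
      a₁ a₂ a₃ b₁ b₂ b₃ c₁ c₂ c₃ ha₁ ha₂ ha₃ hAs hb₁ hb₂ hb₃ hBs hc₁ hc₂ hc₃ hCs hPA hpB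
      (fun r hr _ => by rcases hcov r hr with h | h | h <;> tauto)
  · exact key_contra N (P ^ d) P d p₀ hP hp₀ hp₀N hd rfl hqN hdig hthresh
      a₁ a₂ a₃ c₁ c₂ c₃ b₁ b₂ b₃ ha₁ ha₂ ha₃ hAs hc₁ hc₂ hc₃ hCs hb₁ hb₂ hb₃ hBs hPA hpC
      (fun r hr _ => by rcases hcov r hr with h | h | h <;> tauto)
  · exact key_contra N (P ^ d) P d p₀ hP hp₀ hp₀N hd rfl hqN hdig hthresh
      b₁ b₂ b₃ a₁ a₂ a₃ c₁ c₂ c₃ hb₁ hb₂ hb₃ hBs ha₁ ha₂ ha₃ hAs hc₁ hc₂ hc₃ hCs hPB hpA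
      (fun r hr _ => by rcases hcov r hr with h | h | h <;> tauto)
  · obtain ⟨l1, l2, l3⟩ := hthresh p₀ hp₀ (Or.inr rfl) b₁ b₂ b₃ hb₁ hb₂ hb₃ hBs hpB
    rcases big_part hP hqN hBs hPB with h | h | h <;> omega
  · exact key_contra N (P ^ d) P d p₀ hP hp₀ hp₀N hd rfl hqN hdig hthresh
      b₁ b₂ b₃ c₁ c₂ c₃ a₁ a₂ a₃ hb₁ hb₂ hb₃ hBs hc₁ hc₂ hc₃ hCs ha₁ ha₂ ha₃ hAs hPB hpC
      (fun r hr _ => by rcases hcov r hr with h | h | h <;> tauto)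
  · exact key_contra N (P ^ d) P d p₀ hP hp₀ hp₀N hd rfl hqN hdig hthresh
      c₁ c₂ c₃ a₁ a₂ a₃ b₁ b₂ b₃ hc₁ hc₂ hc₃ hCs ha₁ ha₂ ha₃ hAs hb₁ hb₂ hb₃ hBs hPC hpA
      (fun r hr _ => by rcases hcov r hr with h | h | h <;> tauto)
  · exact key_contra N (P ^ d) P d p₀ hP hp₀ hp₀N hd rfl hqN hdig hthresh
      c₁ c₂ c₃ b₁ b₂ b₃ a₁ a₂ a₃ hc₁ hc₂ hc₃ hCs hb₁ hb₂ hb₃ hBs ha₁ ha₂ ha₃ hAs hPC hpB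
      (fun r hr _ => by rcases hcov r hr with h | h | h <;> tauto)
  · obtain ⟨l1, l2, l3⟩ := hthresh p₀ hp₀ (Or.inr rfl) c₁ c₂ c₃ hc₁ hc₂ hc₃ hCs hpC
    rcases big_part hP hqN hCs hPC with h | h | h <;> omega
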